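/- Let α > -1, k ≥ 1 an integer, and c a real number. Define f(e^{iθ}) = F₁(1)e^{iθ} + c·F_k(1)e^{-ikθ}, where F_k(1) = Γ(k+1)Γ(1+α)/(Γ(k+1+α/2)Γ(1+α/2)). If |c| < Γ(k+1+α/2)/(k²·Γ(k+1)·Γ(2+α/2)), then at every θ where the tangent vector (d/dθ)f(e^{iθ}) has nonzero real part, the derivative in θ of the tangent direction tan(ψ(θ)) (ψ = argument of (d/dθ)f(e^{iθ})) is strictly positive; in particular (F₁(1))² - k³c²(F_k(1))² - k(k-1)|c|F₁(1)F_k(1) > 0. -/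

import Mathlib

open Real Complex in
theorem stmt_12 (α : ℝ) (hα : -1 < α) (k : ℕ) (hk : 1 ≤ k) (c : ℝ)
    (F1 Fk : ℝ)
    (hF1 : F1 = Real.Gamma 2 * Real.Gamma (1 + α) /
      (Real.Gamma (2 + α / 2) * Real.Gamma (1 + α / 2)))
    (hFk : Fk = Real.Gamma ((k : ℝ) + 1) * Real.Gamma (1 + α) /
      (Real.Gamma ((k : ℝ) + 1 + α / 2) * Real.Gamma (1 + α / 2)))
    (hc : |c| < Real.Gamma ((k : ℝ) + 1 + α / 2) /
      ((k : ℝ) ^ 2 * Real.Gamma ((k : ℝ) + 1) * Real.Gamma (2 + α / 2)))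
    (f : ℝ → ℂ)
    (hf : ∀ θ : ℝ, f θ = (F1 : ℂ) * Complex.exp (θ * Complex.I) +
      (c : ℂ) * (Fk : ℂ) * Complex.exp (-(k : ℂ) * θ * Complex.I)) :
    (∀ θ : ℝ, (deriv f θ).re ≠ 0 →
      0 < deriv (fun φ => (deriv f φ).im / (deriv f φ).re) θ) ∧
    F1 ^ 2 - (k : ℝ) ^ 3 * c ^ 2 * Fk ^ 2 - (k : ℝ) * ((k : ℝ) - 1) * |c| * F1 * Fk > 0 := by
  have hk1 : (1:ℝ) ≤ (k:ℝ) := by exact_mod_cast hk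
  have hG1 : 0 < Real.Gamma (1+α) := Real.Gamma_pos_of_pos (by linarith)
  have hG2 : 0 < Real.Gamma (2+α/2) := Real.Gamma_pos_of_pos (by linarith)
  have hGh : 0 < Real.Gamma (1+α/2) := Real.Gamma_pos_of_pos (by linarith)
  have hGk : 0 < Real.Gamma ((k:ℝ)+1) := Real.Gamma_pos_of_pos (by linarith)
  have hGka : 0 < Real.Gamma ((k:ℝ)+1+α/2) := Real.Gamma_pos_of_pos (by linarith)
  have hF1p : 0 < F1 := by rw [hF1, Real.Gamma_two]; positivity
  have hFkp : 0 < Fk := by rw [hFk]; positivity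
  have key : (k:ℝ)^2 * |c| * Fk < F1 := by
    have hD : (0:ℝ) < (k:ℝ)^2 * Real.Gamma ((k:ℝ)+1) * Real.Gamma (2+α/2) := by positivity
    have hc' := (lt_div_iff₀ hD).mp hc
    have e1 : Fk * (Real.Gamma ((k:ℝ)+1+α/2) * Real.Gamma (1+α/2)) =
        Real.Gamma ((k:ℝ)+1) * Real.Gamma (1+α) := by
      rw [hFk, div_mul_cancel₀ _ (by positivity)]
    have e2 : F1 * (Real.Gamma (2+α/2) * Real.Gamma (1+α/2)) = Real.Gamma (1+α) := by
      rw [hF1, Real.Gamma_two, one_mul, div_mul_cancel₀ _ (by positivity)]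
    nlinarith [mul_lt_mul_of_pos_right hc' (mul_pos hFkp hGh), e1, e2,
      mul_pos (mul_pos hG2 hGh) hGk, mul_pos hG1 hGk, hG1.le, hGka.le]
  have part2 : F1 ^ 2 - (k : ℝ) ^ 3 * c ^ 2 * Fk ^ 2 -
      (k : ℝ) * ((k : ℝ) - 1) * |c| * F1 * Fk > 0 := by
    have h1 : 0 < F1 + (k:ℝ) * |c| * Fk := by positivity
    have h2 : 0 < F1 - (k:ℝ)^2 * |c| * Fk := by linarith
    have habs : |c| * |c| = c^2 := by rw [← _root_.sq_abs c]; ring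
    have expand : (F1 + (k:ℝ) * |c| * Fk) * (F1 - (k:ℝ)^2 * |c| * Fk) =
        F1 ^ 2 - (k : ℝ) ^ 3 * c ^ 2 * Fk ^ 2 - (k : ℝ) * ((k : ℝ) - 1) * |c| * F1 * Fk := by
      linear_combination (-(k:ℝ)^3 * Fk^2) * habs
    linarith [mul_pos h1 h2, expand]
  refine ⟨?_, part2⟩
  intro θ hθ
  -- derivative of f
  have hfe : f = fun x:ℝ => (F1 : ℂ) * Complex.exp (x * Complex.I) +
      (c : ℂ) * (Fk : ℂ) * Complex.exp (-(k : ℂ) * x * Complex.I) := funext hf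
  have hexp1 : ∀ x:ℝ, HasDerivAt (fun y:ℝ => Complex.exp (y*Complex.I))
      (Complex.I * Complex.exp (x*Complex.I)) x := by
    intro x
    have := ((Complex.hasDerivAt_exp ((x:ℂ)*Complex.I)).comp (x:ℂ)
      ((hasDerivAt_id (x:ℂ)).mul_const Complex.I)).comp_ofReal
    simpa [mul_comm] using this
  have hexp2 : ∀ x:ℝ, HasDerivAt (fun y:ℝ => Complex.exp (-(k:ℂ)*y*Complex.I))
      (-(k:ℂ)*Complex.I * Complex.exp (-(k:ℂ)*x*Complex.I)) x := by
    intro x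
    have h0 : HasDerivAt (fun z:ℂ => Complex.exp (-(k:ℂ)*z*Complex.I))
        (Complex.exp (-(k:ℂ)*(x:ℂ)*Complex.I) * (-(k:ℂ)*Complex.I)) (x:ℂ) := by
      have hlin : HasDerivAt (fun z:ℂ => -(k:ℂ)*z*Complex.I) (-(k:ℂ)*Complex.I) (x:ℂ) := by
        simpa [mul_assoc, mul_comm] using
          (((hasDerivAt_id ((x:ℂ))).const_mul (-(k:ℂ))).mul_const Complex.I)
      simpa [Function.comp_def] using (Complex.hasDerivAt_exp (-(k:ℂ)*(x:ℂ)*Complex.I)).comp (x:ℂ) hlin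
    have := h0.comp_ofReal
    simpa [mul_comm] using this
  have hd : ∀ x:ℝ, HasDerivAt f ((F1:ℂ)*(Complex.I * Complex.exp (x*Complex.I)) +
      (c:ℂ)*(Fk:ℂ)*(-(k:ℂ)*Complex.I * Complex.exp (-(k:ℂ)*x*Complex.I))) x := by
    intro x
    rw [hfe]
    exact ((hexp1 x).const_mul ((F1:ℂ))).add ((hexp2 x).const_mul ((c:ℂ)*(Fk:ℂ)))
  set R : ℝ → ℝ := fun x => -F1*Real.sin x - (k:ℝ)*c*Fk*Real.sin ((k:ℝ)*x) with hR
  set M : ℝ → ℝ := fun x => F1*Real.cos x - (k:ℝ)*c*Fk*Real.cos ((k:ℝ)*x) with hM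
  have harg : ∀ x:ℝ, -(k:ℂ)*(x:ℂ)*Complex.I = ((-( (k:ℝ)*x) : ℝ):ℂ)*Complex.I := by
    intro x; push_cast; ring
  have hre : ∀ x:ℝ, (deriv f x).re = R x := by
    intro x
    rw [(hd x).deriv, harg x]
    simp only [Complex.add_re, Complex.add_im, Complex.mul_re, Complex.mul_im,
      Complex.I_re, Complex.I_im, Complex.ofReal_re, Complex.ofReal_im,
      Complex.neg_re, Complex.neg_im, Complex.natCast_re, Complex.natCast_im,
      Complex.exp_ofReal_mul_I_re, Complex.exp_ofReal_mul_I_im,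
      Real.cos_neg, Real.sin_neg, hR]
    ring
  have him : ∀ x:ℝ, (deriv f x).im = M x := by
    intro x
    rw [(hd x).deriv, harg x]
    simp only [Complex.add_re, Complex.add_im, Complex.mul_re, Complex.mul_im,
      Complex.I_re, Complex.I_im, Complex.ofReal_re, Complex.ofReal_im,
      Complex.neg_re, Complex.neg_im, Complex.natCast_re, Complex.natCast_im,
      Complex.exp_ofReal_mul_I_re, Complex.exp_ofReal_mul_I_im,
      Real.cos_neg, Real.sin_neg, hM]
    ring
  have hRθ : R θ ≠ 0 := by rw [← hre]; exact hθ
  -- derivatives of R and M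
  have hsinK : ∀ x:ℝ, HasDerivAt (fun y:ℝ => Real.sin ((k:ℝ)*y)) ((k:ℝ)*Real.cos ((k:ℝ)*x)) x := by
    intro x
    have h1 : HasDerivAt (fun y:ℝ => Real.sin ((k:ℝ)*y)) (Real.cos ((k:ℝ)*x) * ((k:ℝ)*1)) x :=
      (Real.hasDerivAt_sin _).comp x ((hasDerivAt_id x).const_mul _)
    convert h1 using 1
    ring
  have hcosK : ∀ x:ℝ, HasDerivAt (fun y:ℝ => Real.cos ((k:ℝ)*y)) (-((k:ℝ)*Real.sin ((k:ℝ)*x))) x := by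
    intro x
    have h1 : HasDerivAt (fun y:ℝ => Real.cos ((k:ℝ)*y)) (-Real.sin ((k:ℝ)*x) * ((k:ℝ)*1)) x :=
      (Real.hasDerivAt_cos _).comp x ((hasDerivAt_id x).const_mul _)
    convert h1 using 1
    ring
  have hRd : HasDerivAt R (-F1*Real.cos θ - (k:ℝ)^2*c*Fk*Real.cos ((k:ℝ)*θ)) θ := by
    have h1 := (Real.hasDerivAt_sin θ).const_mul (-F1)
    have h2 := (hsinK θ).const_mul ((k:ℝ)*c*Fk)
    have := h1.sub h2
    exact this.congr_deriv (by ring)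
  have hMd : HasDerivAt M (-F1*Real.sin θ + (k:ℝ)^2*c*Fk*Real.sin ((k:ℝ)*θ)) θ := by
    have h1 := (Real.hasDerivAt_cos θ).const_mul F1
    have h2 := (hcosK θ).const_mul ((k:ℝ)*c*Fk)
    have := h1.sub h2
    exact this.congr_deriv (by ring)
  have hfun : (fun φ => (deriv f φ).im / (deriv f φ).re) = fun φ => M φ / R φ := by
    funext φ; rw [hre, him]
  rw [hfun]
  have hq := (hMd.div hRd hRθ).deriv
  rw [show (fun φ => M φ / R φ) = M / R from rfl, hq]
  -- positivity of the numerator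
  have hs := Real.sin_sq_add_cos_sq θ
  have hS := Real.sin_sq_add_cos_sq ((k:ℝ)*θ)
  have hct : -|c| ≤ c * Real.cos ((k:ℝ)*θ + θ) := by
    have h1 : |c * Real.cos ((k:ℝ)*θ + θ)| ≤ |c| := by
      rw [abs_mul]
      exact mul_le_of_le_one_right (abs_nonneg c) (Real.abs_cos_le_one _)
    linarith [neg_abs_le (c * Real.cos ((k:ℝ)*θ + θ)), neg_le_neg h1]
  have hcoef : (0:ℝ) ≤ (k:ℝ)*((k:ℝ)-1)*F1*Fk := by
    have : (0:ℝ) ≤ (k:ℝ)-1 := by linarith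
    positivity
  have hnum : 0 < (-F1*Real.sin θ + (k:ℝ)^2*c*Fk*Real.sin ((k:ℝ)*θ)) * R θ -
      M θ * (-F1*Real.cos θ - (k:ℝ)^2*c*Fk*Real.cos ((k:ℝ)*θ)) := by
    have e1 : (-F1*Real.sin θ + (k:ℝ)^2*c*Fk*Real.sin ((k:ℝ)*θ)) * R θ -
        M θ * (-F1*Real.cos θ - (k:ℝ)^2*c*Fk*Real.cos ((k:ℝ)*θ)) =
        F1^2*(Real.sin θ^2 + Real.cos θ^2) -
        (k:ℝ)^3*c^2*Fk^2*(Real.sin ((k:ℝ)*θ)^2 + Real.cos ((k:ℝ)*θ)^2) +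
        ((k:ℝ)*((k:ℝ)-1)*F1*Fk) * (c * (Real.cos ((k:ℝ)*θ) * Real.cos θ - Real.sin ((k:ℝ)*θ) * Real.sin θ)) := by
      simp only [hR, hM]; ring
    rw [hs, hS, ← Real.cos_add] at e1
    rw [e1]
    have hb := mul_le_mul_of_nonneg_left hct hcoef
    nlinarith [hb, part2]
  exact div_pos hnum (by positivity)
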